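/- With the notation of the canonical partition construction, for each j with 1 ≤ j ≤ q, the set C_j (defined iteratively as the smallest maximizer of p(X) − (β_j−1)|X| among all X containing C_{j−1}) is in fact the smallest maximizer of p(X) − (β_j−1)|X| among all subsets X of S, i.e., C_j = L(β_j − 1). -/
import Mathlib


open Finset

variable {α : Type*} [Fintype α] [DecidableEq α]

def Supermodular (p : Finset α → EReal) : Prop :=
  ∀ X Y : Finset α, p X + p Y ≤ p (X ∩ Y) + p (X ∪ Y)

/-- `p` takes values in `ℤ ∪ {−∞}`. -/
def IntegerValued (p : Finset α → EReal) : Prop :=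
  ∀ X : Finset α, p X = ⊥ ∨ ∃ n : ℤ, p X = ((n : ℝ) : EReal)

/-- `X` maximizes `Z ↦ p(Z) − λ|Z|` over all subsets `Z` of the ground-set. -/
def IsMaximizer (p : Finset α → EReal) (lam : ℝ) (X : Finset α) : Prop :=
  ∀ Y : Finset α,
    p Y - ((lam * (Y.card : ℝ) : ℝ) : EReal) ≤ p X - ((lam * (X.card : ℝ) : ℝ) : EReal)

/-- The data of the iterative contraction procedure defining the essential values
`β j`, the sets `S_j = Sj j` and the canonical chain `C j` (for `1 ≤ j ≤ q`):
`β j` is the maximum of `⌈(p(X ∪ C_{j−1}) − p(C_{j−1}))/|X|⌉` over nonempty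
`X ⊆ S − C_{j−1}`; `Sj j` is the smallest subset of `S − C_{j−1}` maximizing
`h_j(X) = p(X ∪ C_{j−1}) − (β_j − 1)|X| − p(C_{j−1})`; and `C j = C (j−1) ∪ Sj j`. -/
structure CanonicalData (p : Finset α → EReal) (q : ℕ) (β : ℕ → ℤ)
    (C Sj : ℕ → Finset α) : Prop where
  hC0 : C 0 = ∅
  hCq : C q = Finset.univ
  hCne : ∀ j, 1 ≤ j → j ≤ q → C (j - 1) ≠ Finset.univ
  /-- `β j` is an upper bound for the ceilings: `p(X ∪ C_{j−1}) − p(C_{j−1}) ≤ β_j |X|`. -/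
  hβub : ∀ j, 1 ≤ j → j ≤ q → ∀ X : Finset α, X ⊆ Finset.univ \ C (j - 1) → X.Nonempty →
    p (X ∪ C (j - 1)) ≤ p (C (j - 1)) + (((β j * (X.card : ℤ) : ℤ) : ℝ) : EReal)
  /-- `β j` is attained: some nonempty `X` has `p(X ∪ C_{j−1}) − p(C_{j−1}) > (β_j−1)|X|`. -/
  hβattain : ∀ j, 1 ≤ j → j ≤ q → ∃ X : Finset α, X ⊆ Finset.univ \ C (j - 1) ∧ X.Nonempty ∧
    p (C (j - 1)) + ((((β j - 1) * (X.card : ℤ) : ℤ) : ℝ) : EReal) < p (X ∪ C (j - 1))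
  hSsub : ∀ j, 1 ≤ j → j ≤ q → Sj j ⊆ Finset.univ \ C (j - 1)
  /-- `Sj j` maximizes `h_j` over subsets of `S − C_{j−1}`. -/
  hSmax : ∀ j, 1 ≤ j → j ≤ q → ∀ X : Finset α, X ⊆ Finset.univ \ C (j - 1) →
    p (X ∪ C (j - 1)) - ((((β j - 1) * (X.card : ℤ) : ℤ) : ℝ) : EReal) ≤
      p (Sj j ∪ C (j - 1)) - ((((β j - 1) * ((Sj j).card : ℤ) : ℤ) : ℝ) : EReal)
  /-- `Sj j` is the smallest such maximizer. -/
  hSmin : ∀ j, 1 ≤ j → j ≤ q → ∀ X : Finset α, X ⊆ Finset.univ \ C (j - 1) →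
    p (X ∪ C (j - 1)) - ((((β j - 1) * (X.card : ℤ) : ℤ) : ℝ) : EReal) =
      p (Sj j ∪ C (j - 1)) - ((((β j - 1) * ((Sj j).card : ℤ) : ℤ) : ℝ) : EReal) →
    Sj j ⊆ X
  hCj : ∀ j, 1 ≤ j → j ≤ q → C j = C (j - 1) ∪ Sj j

lemma esub_le (x y : EReal) (a b : ℝ) :
    x - (a:EReal) ≤ y - (b:EReal) ↔ x + ((b - a:ℝ):EReal) ≤ y := by
  induction x using EReal.rec <;> induction y using EReal.rec <;>
    simp [EReal.bot_sub, EReal.top_sub_coe, EReal.bot_add, EReal.top_add_coe,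
      ← EReal.coe_sub, ← EReal.coe_add] <;>
    first
      | rfl
      | (constructor <;> intro h <;> linarith)

lemma esub_eq (x y : EReal) (a b : ℝ) :
    x - (a:EReal) = y - (b:EReal) ↔ x + ((b - a:ℝ):EReal) = y := by
  induction x using EReal.rec <;> induction y using EReal.rec <;>
    simp [EReal.bot_sub, EReal.top_sub_coe, EReal.bot_add, EReal.top_add_coe,
      ← EReal.coe_sub, ← EReal.coe_add] <;>
    first
      | rfl
      | (constructor <;> intro h <;> linarith)

lemma isMaximizer_ne_bot {p : Finset α → EReal} (hp0 : p ∅ = 0) {lam : ℝ} {A : Finset α}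
    (hA : IsMaximizer p lam A) : p A ≠ ⊥ := by
  intro h
  have h2 := hA ∅
  rw [hp0, h] at h2
  simp [EReal.bot_sub] at h2

lemma exists_real {p : Finset α → EReal} (hint : IntegerValued p) {A : Finset α}
    (hA : p A ≠ ⊥) : ∃ a : ℝ, p A = (a : EReal) := by
  rcases hint A with h | ⟨n, h⟩
  · exact absurd h hA
  · exact ⟨n, h⟩

lemma supermodular_real {p : Finset α → EReal} (hsup : Supermodular p)
    (hint : IntegerValued p) {A B : Finset α} {a b : ℝ}
    (hA : p A = (a:EReal)) (hB : p B = (b:EReal)) :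
    ∃ c d : ℝ, p (A ∩ B) = (c:EReal) ∧ p (A ∪ B) = (d:EReal) ∧ a + b ≤ c + d := by
  have h := hsup A B
  rw [hA, hB, ← EReal.coe_add] at h
  have hcap : p (A ∩ B) ≠ ⊥ := by
    intro hc
    rw [hc, EReal.bot_add] at h
    simp at h
  have hcup : p (A ∪ B) ≠ ⊥ := by
    intro hc
    rw [hc, EReal.add_bot] at h
    simp at h
  obtain ⟨c, hc⟩ := exists_real hint hcap
  obtain ⟨d, hd⟩ := exists_real hint hcup
  refine ⟨c, d, hc, hd, ?_⟩
  rw [hc, hd, ← EReal.coe_add, EReal.coe_le_coe_iff] at h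
  exact h

lemma maximizer_nested {p : Finset α → EReal} (hp0 : p ∅ = 0) (hsup : Supermodular p)
    (hint : IntegerValued p) {lam mu : ℝ} (hlm : lam < mu) {A B : Finset α}
    (hA : IsMaximizer p mu A) (hB : IsMaximizer p lam B) : A ⊆ B := by
  obtain ⟨a, ha⟩ := exists_real hint (isMaximizer_ne_bot hp0 hA)
  obtain ⟨b, hb⟩ := exists_real hint (isMaximizer_ne_bot hp0 hB)
  obtain ⟨c, d, hc, hd, hcd⟩ := supermodular_real hsup hint ha hb
  have h1 := hA (A ∩ B)
  have h2 := hB (A ∪ B)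
  rw [ha, hc, esub_le, ← EReal.coe_add, EReal.coe_le_coe_iff] at h1
  rw [hb, hd, esub_le, ← EReal.coe_add, EReal.coe_le_coe_iff] at h2
  have hcard : (A ∩ B).card + (A ∪ B).card = A.card + B.card :=
    Finset.card_inter_add_card_union A B
  have hcR : ((A ∩ B).card : ℝ) + ((A ∪ B).card : ℝ) = (A.card : ℝ) + (B.card : ℝ) := by
    exact_mod_cast hcard
  have hle : (A ∩ B).card ≤ A.card := Finset.card_le_card Finset.inter_subset_left
  have hleR : ((A ∩ B).card : ℝ) ≤ (A.card : ℝ) := by exact_mod_cast hle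
  have hUB : ((A ∪ B).card : ℝ) = (A.card : ℝ) + (B.card : ℝ) - ((A ∩ B).card : ℝ) := by
    linarith
  rw [hUB] at h2
  have hmul : (mu - lam) * ((A.card : ℝ) - ((A ∩ B).card : ℝ)) ≤ 0 := by nlinarith
  have ht : (A.card : ℝ) ≤ ((A ∩ B).card : ℝ) := by nlinarith
  have htn : A.card ≤ (A ∩ B).card := by exact_mod_cast ht
  have heq : A ∩ B = A := Finset.eq_of_subset_of_card_le Finset.inter_subset_left htn
  exact Finset.inter_eq_left.mp heq

/-- Each `C j` of the canonical chain is in fact the smallest maximizer of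
`X ↦ p(X) − (β_j − 1)|X|` among all subsets `X` of `S`, i.e. `C j = L(β_j − 1)`. -/
theorem canonical_chain_is_global_smallest_maximizer (p : Finset α → EReal) (hp0 : p ∅ = 0)
    (hfin : p (Finset.univ : Finset α) ≠ ⊥) (hsup : Supermodular p)
    (hint : IntegerValued p) (q : ℕ) (β : ℕ → ℤ) (C Sj : ℕ → Finset α)
    (hdata : CanonicalData p q β C Sj) :
    ∀ j, 1 ≤ j → j ≤ q →
      IsMaximizer p ((β j : ℝ) - 1) (C j) ∧
      ∀ X : Finset α, IsMaximizer p ((β j : ℝ) - 1) X → C j ⊆ X := by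
  obtain ⟨hC0, hCq, hCne, hβub, hβattain, hSsub, hSmax, hSmin, hCj⟩ := hdata
  intro j
  induction j with
  | zero => omega
  | succ n ih =>
    intro _ hq
    set lam : ℝ := (β (n+1) : ℝ) - 1 with hlam
    have hn1q : 1 ≤ n + 1 := by omega
    have hnsub : (n + 1) - 1 = n := rfl
    -- the three facts about D := C n
    have hfacts : (∃ d : ℝ, p (C n) = (d : EReal)) ∧
        (∀ Y : Finset α, p Y - ((lam * (Y.card : ℝ) : ℝ) : EReal) ≤
          p (Y ∪ C n) - ((lam * (((Y ∪ C n).card : ℕ) : ℝ) : ℝ) : EReal)) ∧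
        (∀ X : Finset α, IsMaximizer p lam X → C n ⊆ X) := by
      rcases Nat.eq_zero_or_pos n with hn0 | hn1
      · subst hn0
        rw [hC0]
        refine ⟨⟨0, by rw [hp0]; simp⟩, ?_, ?_⟩
        · intro Y; simp
        · intro X _; exact Finset.empty_subset X
      · have hnq : n ≤ q := by omega
        obtain ⟨hmaxn, hminn⟩ := ih hn1 hnq
        have hDbot : p (C n) ≠ ⊥ := isMaximizer_ne_bot hp0 hmaxn
        obtain ⟨dn, hdn⟩ := exists_real hint hDbot
        set mu : ℝ := (β n : ℝ) - 1 with hmu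
        -- strict decrease : lam < mu
        have hlt : lam < mu := by
          obtain ⟨X, hXsub, hXne, hXlt⟩ := hβattain (n+1) hn1q hq
          rw [hnsub] at hXsub hXlt
          have hXCd : Disjoint X (C n) := by
            rw [Finset.disjoint_left]
            intro x hx hx2
            exact (Finset.mem_sdiff.mp (hXsub hx)).2 hx2
          have hCneq : C n = C (n-1) ∪ Sj n := hCj n hn1 hnq
          have hSjCn : Sj n ⊆ C n := by rw [hCneq]; exact Finset.subset_union_right
          have hsubn : Sj n ∪ X ⊆ Finset.univ \ C (n-1) := by
            apply Finset.union_subset (hSsub n hn1 hnq)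
            intro x hx
            have := hXsub hx
            rw [Finset.mem_sdiff] at this ⊢
            refine ⟨this.1, fun hc => this.2 ?_⟩
            rw [hCneq]
            exact Finset.mem_union_left _ hc
          have hmax := hSmax n hn1 hnq (Sj n ∪ X) hsubn
          have hU1 : (Sj n ∪ X) ∪ C (n-1) = X ∪ C n := by
            rw [hCneq]; ac_rfl
          have hU2 : Sj n ∪ C (n-1) = C n := by rw [hCneq]; ac_rfl
          have hcardU : (Sj n ∪ X).card = (Sj n).card + X.card :=
            Finset.card_union_of_disjoint (Finset.disjoint_of_subset_left hSjCn hXCd.symm)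
          have hXbot : p (X ∪ C n) ≠ ⊥ := by
            intro hb
            rw [hb, hdn] at hXlt
            exact absurd hXlt (by simp [← EReal.coe_add])
          obtain ⟨u, hu⟩ := exists_real hint hXbot
          rw [hU1, hU2, hcardU, hu, hdn, esub_le, ← EReal.coe_add, EReal.coe_le_coe_iff] at hmax
          rw [hdn, hu, ← EReal.coe_add, EReal.coe_lt_coe_iff] at hXlt
          have hx1 : (1:ℝ) ≤ (X.card : ℝ) := by
            have := Finset.card_pos.mpr hXne
            exact_mod_cast this
          rw [hlam, hmu]
          push_cast at hmax hXlt ⊢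
          nlinarith
        refine ⟨⟨dn, hdn⟩, ?_, ?_⟩
        · -- key1
          intro Y
          by_cases hY : p Y = ⊥
          · rw [hY, EReal.bot_sub]; exact bot_le
          obtain ⟨y, hy⟩ := exists_real hint hY
          obtain ⟨c, d, hc, hd, hcd⟩ := supermodular_real hsup hint hy hdn
          have h1 := hmaxn (Y ∩ C n)
          rw [hc, hdn, esub_le, ← EReal.coe_add, EReal.coe_le_coe_iff] at h1
          rw [hy, hd, esub_le, ← EReal.coe_add, EReal.coe_le_coe_iff]
          have hcR : ((Y ∩ C n).card : ℝ) + ((Y ∪ C n).card : ℝ) = (Y.card : ℝ) + ((C n).card : ℝ) := by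
            exact_mod_cast Finset.card_inter_add_card_union Y (C n)
          have hleR : ((Y ∩ C n).card : ℝ) ≤ ((C n).card : ℝ) := by
            exact_mod_cast Finset.card_le_card (Finset.inter_subset_right)
          have hmul : lam * (((C n).card : ℝ) - ((Y ∩ C n).card : ℝ)) ≤
              mu * (((C n).card : ℝ) - ((Y ∩ C n).card : ℝ)) :=
            mul_le_mul_of_nonneg_right (le_of_lt hlt) (by linarith)
          have hUB : ((Y ∪ C n).card : ℝ) = (Y.card : ℝ) + ((C n).card : ℝ) - ((Y ∩ C n).card : ℝ) := by
            linarith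
          rw [hUB]
          nlinarith [hmul, h1, hcd]
        · intro X hX
          exact maximizer_nested hp0 hsup hint hlt hmaxn hX
    obtain ⟨⟨dn, hdn⟩, key1, hDsub⟩ := hfacts
    have hCjj : C (n+1) = C n ∪ Sj (n+1) := hCj (n+1) hn1q hq
    have hSjsub := hSsub (n+1) hn1q hq
    rw [hnsub] at hSjsub
    have hSjdisj : Disjoint (Sj (n+1)) (C n) := by
      rw [Finset.disjoint_left]
      intro x hx hx2
      exact (Finset.mem_sdiff.mp (hSjsub hx)).2 hx2
    have hCcard : ((C (n+1)).card : ℝ) = ((Sj (n+1)).card : ℝ) + ((C n).card : ℝ) := by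
      rw [hCjj]
      rw [Finset.card_union_of_disjoint hSjdisj.symm]
      push_cast; ring
    have hmax : IsMaximizer p lam (C (n+1)) := by
      intro Y
      have s1 := key1 Y
      set X : Finset α := (Y ∪ C n) \ C n with hXdef
      have hXsub : X ⊆ Finset.univ \ C n :=
        Finset.sdiff_subset_sdiff (Finset.subset_univ _) (le_refl _)
      have hXU : X ∪ C n = Y ∪ C n := by
        rw [hXdef, Finset.sdiff_union_self_eq_union, Finset.union_assoc, Finset.union_self]
      have hXcard : ((Y ∪ C n).card : ℝ) = (X.card : ℝ) + ((C n).card : ℝ) := by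
        have := Finset.card_sdiff_add_card_eq_card (Finset.subset_union_right : C n ⊆ Y ∪ C n)
        rw [hXdef]
        exact_mod_cast this.symm
      have s2 := hSmax (n+1) hn1q hq X hXsub
      rw [hnsub, hXU, ← Finset.union_comm (C n) (Sj (n+1)), ← hCjj] at s2
      have s3 : p (Y ∪ C n) - ((lam * (((Y ∪ C n).card : ℕ) : ℝ) : ℝ) : EReal) ≤
          p (C (n+1)) - ((lam * (((C (n+1)).card : ℕ) : ℝ) : ℝ) : EReal) := by
        rw [esub_le]
        rw [esub_le] at s2
        have hre : lam * (((C (n+1)).card : ℕ) : ℝ) - lam * (((Y ∪ C n).card : ℕ) : ℝ) =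
            (((β (n+1) - 1) * (((Sj (n+1)).card : ℕ) : ℤ) : ℤ) : ℝ) -
            (((β (n+1) - 1) * ((X.card : ℕ) : ℤ) : ℤ) : ℝ) := by
          rw [hCcard, hXcard, hlam]
          push_cast
          ring
        rw [hre]
        exact s2
      exact le_trans s1 s3
    refine ⟨hmax, ?_⟩
    intro X hX
    have hCnX : C n ⊆ X := hDsub X hX
    have hfeq : p X - ((lam * ((X.card : ℕ) : ℝ) : ℝ) : EReal) =
        p (C (n+1)) - ((lam * (((C (n+1)).card : ℕ) : ℝ) : ℝ) : EReal) :=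
      le_antisymm (hmax X) (hX (C (n+1)))
    set X' : Finset α := X \ C n with hX'def
    have hX'sub : X' ⊆ Finset.univ \ C n :=
      Finset.sdiff_subset_sdiff (Finset.subset_univ _) (le_refl _)
    have hX'U : X' ∪ C n = X := Finset.sdiff_union_of_subset hCnX
    have hX'card : ((X.card : ℕ) : ℝ) = (X'.card : ℝ) + ((C n).card : ℝ) := by
      have := Finset.card_sdiff_add_card_eq_card hCnX
      rw [hX'def]
      exact_mod_cast this.symm
    have heq2 : p (X' ∪ C n) - ((((β (n+1) - 1) * ((X'.card : ℕ) : ℤ) : ℤ) : ℝ) : EReal) =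
        p (Sj (n+1) ∪ C n) - ((((β (n+1) - 1) * (((Sj (n+1)).card : ℕ) : ℤ) : ℤ) : ℝ) : EReal) := by
      rw [hX'U, ← Finset.union_comm (C n) (Sj (n+1)), ← hCjj]
      rw [esub_eq]
      rw [esub_eq] at hfeq
      have hre : (((β (n+1) - 1) * (((Sj (n+1)).card : ℕ) : ℤ) : ℤ) : ℝ) -
          (((β (n+1) - 1) * ((X'.card : ℕ) : ℤ) : ℤ) : ℝ) =
          lam * (((C (n+1)).card : ℕ) : ℝ) - lam * ((X.card : ℕ) : ℝ) := by
        rw [hCcard, hX'card, hlam]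
        push_cast
        ring
      rw [hre]
      exact hfeq
    have hSjX : Sj (n+1) ⊆ X' := by
      have := hSmin (n+1) hn1q hq X' (by rw [hnsub]; exact hX'sub)
      rw [hnsub] at this
      exact this heq2
    rw [hCjj]
    exact Finset.union_subset hCnX (le_trans hSjX (Finset.sdiff_subset))
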